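/- Let V be a finite set, U = ⊕_{v∈V} U_v a direct sum of k-vector spaces, W ⊆ U a finite-dimensional subspace, and π = (π₁,…,π_r) an ordered partition of V with filtration F_n = π₁∪⋯∪π_n. Define W_n = proj_{π_n}(W^{F_n}), where W^{F_n} = W ∩ ⊕_{v∈F_n} U_v, and W(π) = ⊕_{n=1}^r W_n ⊆ U. Then the supermodular function ν_{W(π)} of the subspace W(π) equals the splitting (ν_W)_π = Σ_{n=1}^r (ν_W)_{F_n/F_{n−1}} of the supermodular function ν_W of W. -/

import Mathlib

attribute [local instance] Classical.propDecidable
set_option linter.unusedSectionVars false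

variable {V : Type*} [Fintype V] {k : Type*} [Field k]
variable {U : V → Type*} [∀ v, AddCommGroup (U v)] [∀ v, Module k (U v)]

/-- The coordinate projection of `U = ⊕_v U_v` killing the components outside `I`. -/
noncomputable def projEnd (k : Type*) [Field k] {V : Type*} (U : V → Type*)
    [∀ v, AddCommGroup (U v)] [∀ v, Module k (U v)] (I : Set V) :
    ((v : V) → U v) →ₗ[k] ((v : V) → U v) :=
  LinearMap.pi fun v => if v ∈ I then LinearMap.proj v else 0

/-- The submodule of elements supported in `I`. -/
noncomputable def SS (I : Set V) : Submodule k ((v : V) → U v) :=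
  LinearMap.ker (projEnd k U Iᶜ)

lemma projEnd_apply (I : Set V) (x : (v : V) → U v) (v : V) :
    projEnd k U I x v = if v ∈ I then x v else 0 := by
  rw [projEnd, LinearMap.pi_apply]
  split_ifs <;> simp_all

lemma mem_SS {I : Set V} {x : (v : V) → U v} :
    x ∈ (SS I : Submodule k ((v : V) → U v)) ↔ ∀ v, v ∉ I → x v = 0 := by
  simp only [SS, LinearMap.mem_ker, funext_iff, projEnd_apply, Set.mem_compl_iff,
    Pi.zero_apply, ite_eq_right_iff]

lemma projEnd_mem_SS (A : Set V) (x : (v : V) → U v) :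
    projEnd k U A x ∈ (SS A : Submodule k ((v : V) → U v)) := by
  rw [mem_SS]
  intro v hv
  rw [projEnd_apply, if_neg hv]

lemma projEnd_eq_self {A : Set V} {x : (v : V) → U v}
    (hx : x ∈ (SS A : Submodule k ((v : V) → U v))) : projEnd k U A x = x := by
  funext v
  rw [projEnd_apply]
  split_ifs with hv
  · rfl
  · exact (mem_SS.1 hx v hv).symm

lemma projEnd_mem_SS_of_mem {I A : Set V} {x : (v : V) → U v}
    (hx : x ∈ (SS I : Submodule k ((v : V) → U v))) :
    projEnd k U A x ∈ (SS I : Submodule k ((v : V) → U v)) := by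
  rw [mem_SS] at hx ⊢
  intro v hv
  rw [projEnd_apply]
  split_ifs with h
  · exact hx v hv
  · rfl

lemma SS_mono {A B : Set V} (hAB : A ⊆ B) :
    (SS A : Submodule k ((v : V) → U v)) ≤ SS B := by
  intro x hx
  rw [mem_SS] at hx ⊢
  exact fun v hv => hx v (fun hvA => hv (hAB hvA))

lemma SS_inf_eq_bot {A B : Set V} (hd : ∀ v, v ∈ A → v ∉ B) :
    (SS A : Submodule k ((v : V) → U v)) ⊓ SS B = ⊥ := by
  rw [eq_bot_iff]
  intro x hx
  rw [Submodule.mem_inf] at hx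
  obtain ⟨hxA, hxB⟩ := hx
  rw [mem_SS] at hxA hxB
  simp only [Submodule.mem_bot]
  funext v
  by_cases hv : v ∈ A
  · exact hxB v (hd v hv)
  · exact hxA v hv

lemma finrank_biSup_eq_sum (s : Finset ℕ) (p : ℕ → Submodule k ((v : V) → U v))
    (A : ℕ → Set V) (hfin : ∀ n, FiniteDimensional k (p n))
    (hp : ∀ n, p n ≤ SS (A n))
    (hd : ∀ m n, m ≠ n → ∀ v, v ∈ A m → v ∉ A n) :
    Module.finrank k ↥(⨆ n ∈ s, p n) = ∑ n ∈ s, Module.finrank k ↥(p n) := by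
  classical
  induction s using Finset.induction_on with
  | empty =>
    rw [show (⨆ n ∈ (∅ : Finset ℕ), p n) = ⊥ by simp, Finset.sum_empty, finrank_bot]
  | insert a s ha ih =>
    haveI := hfin
    haveI : FiniteDimensional k ↥(⨆ n ∈ s, p n) := by
      have := Submodule.finiteDimensional_finset_sup s p
      rwa [Finset.sup_eq_iSup] at this
    rw [Finset.iSup_insert, Finset.sum_insert ha, ← ih]
    have hbot : p a ⊓ (⨆ n ∈ s, p n) = ⊥ := by
      rw [eq_bot_iff]
      have h1 : (⨆ n ∈ s, p n) ≤ SS (⋃ n ∈ s, A n) := by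
        refine iSup₂_le fun n hn => (hp n).trans (SS_mono ?_)
        exact Set.subset_biUnion_of_mem hn
      refine le_trans (inf_le_inf (hp a) h1) ?_
      rw [SS_inf_eq_bot]
      intro v hv hv'
      simp only [Set.mem_iUnion] at hv'
      obtain ⟨n, hn, hvn⟩ := hv'
      exact hd a n (fun hh => ha (hh ▸ hn)) v hv hvn
    have := Submodule.finrank_sup_add_finrank_inf_eq (p a) (⨆ n ∈ s, p n)
    rw [hbot] at this
    simp only [finrank_bot, add_zero] at this
    omega

lemma inf_biSup (M : ℕ → Submodule k ((v : V) → U v)) (r : ℕ) (h : V → ℕ)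
    (hlev : ∀ v, 1 ≤ h v ∧ h v ≤ r) (I : Set V)
    (hMP : ∀ n, M n ≤ SS {v | h v = n}) :
    (⨆ n ∈ Finset.Icc 1 r, M n) ⊓ SS I = ⨆ n ∈ Finset.Icc 1 r, (M n ⊓ SS I) := by
  apply le_antisymm
  · intro x hx
    rw [Submodule.mem_inf] at hx
    obtain ⟨hx1, hx2⟩ := hx
    have hproj : ∀ n, projEnd k U {v | h v = n} x ∈ M n := by
      intro n
      have h1 : Submodule.map (projEnd k U {v | h v = n}) (⨆ m ∈ Finset.Icc 1 r, M m)
          ≤ M n := by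
        simp only [Submodule.map_iSup]
        refine iSup₂_le fun m hm => ?_
        rw [Submodule.map_le_iff_le_comap]
        intro y hy
        rw [Submodule.mem_comap]
        rcases eq_or_ne m n with rfl | hmn
        · rw [projEnd_eq_self (hMP m hy)]; exact hy
        · have h0 : projEnd k U {v | h v = n} y = 0 := by
            funext v
            rw [projEnd_apply]
            split_ifs with hv
            · refine mem_SS.1 (hMP m hy) v ?_
              simp only [Set.mem_setOf_eq] at hv ⊢
              omega
            · rfl
          rw [h0]; exact (M n).zero_mem
      exact h1 (Submodule.mem_map_of_mem hx1)
    have hdecomp : x = ∑ n ∈ Finset.Icc 1 r, projEnd k U {v | h v = n} x := by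
      funext v
      rw [Finset.sum_apply]
      rw [Finset.sum_eq_single_of_mem (h v)
        (Finset.mem_Icc.mpr ⟨(hlev v).1, (hlev v).2⟩)
        (fun b _ hbne => by
          rw [projEnd_apply,
            if_neg (show v ∉ {v | h v = b} from fun hc => hbne (Eq.symm hc))])]
      rw [projEnd_apply, if_pos (show v ∈ {v' | h v' = h v} from rfl)]
    rw [hdecomp]
    refine Submodule.sum_mem _ fun n hn => ?_
    refine Submodule.mem_iSup_of_mem n ?_
    refine Submodule.mem_iSup_of_mem hn ?_
    exact Submodule.mem_inf.2 ⟨hproj n, projEnd_mem_SS_of_mem hx2⟩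
  · refine iSup₂_le fun n hn => inf_le_inf ?_ le_rfl
    exact le_iSup₂ (f := fun n _ => M n) n hn

lemma inf_SS_eq (W : Submodule k ((v : V) → U v)) (h : V → ℕ) (I : Set V) (n : ℕ)
    (hn1 : 1 ≤ n) :
    ((W ⊓ SS {v | h v ≤ n}).map (projEnd k U {v | h v = n})) ⊓ SS I
      = (W ⊓ SS ((I ∩ {v | h v ≤ n}) ∪ {v | h v ≤ n - 1})).map
          (projEnd k U {v | h v = n}) := by
  apply le_antisymm
  · intro y hy
    rw [Submodule.mem_inf] at hy
    obtain ⟨hyM, hyI⟩ := hy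
    obtain ⟨w, hw, rfl⟩ := Submodule.mem_map.1 hyM
    rw [Submodule.mem_inf] at hw
    refine Submodule.mem_map_of_mem (Submodule.mem_inf.2 ⟨hw.1, ?_⟩)
    rw [mem_SS]
    intro v hv
    simp only [Set.mem_union, Set.mem_inter_iff, Set.mem_setOf_eq, not_or, not_and] at hv
    obtain ⟨hv1, hv2⟩ := hv
    by_cases hvn : h v ≤ n
    · have hveq : h v = n := by omega
      have hvI : v ∉ I := fun hc => hv1 hc hvn
      have h0 := mem_SS.1 hyI v hvI
      rw [projEnd_apply] at h0
      rwa [if_pos (show v ∈ {v | h v = n} from hveq)] at h0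
    · exact mem_SS.1 hw.2 v hvn
  · intro y hy
    obtain ⟨w, hw, rfl⟩ := Submodule.mem_map.1 hy
    rw [Submodule.mem_inf] at hw
    rw [Submodule.mem_inf]
    constructor
    · refine Submodule.mem_map_of_mem (Submodule.mem_inf.2 ⟨hw.1, ?_⟩)
      refine SS_mono ?_ hw.2
      rintro v (⟨_, hv⟩ | hv)
      · exact hv
      · simp only [Set.mem_setOf_eq] at hv ⊢
        omega
    · rw [mem_SS]
      intro v hvI
      rw [projEnd_apply]
      split_ifs with hvn
      · have hvn' : h v = n := hvn
        refine mem_SS.1 hw.2 v ?_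
        simp only [Set.mem_union, Set.mem_inter_iff, Set.mem_setOf_eq, not_or, not_and]
        exact ⟨fun hc _ => hvI hc, by omega⟩
      · rfl

set_option synthInstance.maxHeartbeats 1000000 in
set_option maxHeartbeats 1000000 in
lemma rank_step (W : Submodule k ((v : V) → U v)) [FiniteDimensional k ↥W]
    (h : V → ℕ) (I : Set V) (n : ℕ) (hn1 : 1 ≤ n) :
    (Module.finrank k ↥((W ⊓ SS ((I ∩ {v | h v ≤ n}) ∪ {v | h v ≤ n - 1})).map
        (projEnd k U {v | h v = n})) : ℤ) =
      (Module.finrank k ↥(W ⊓ SS ((I ∩ {v | h v ≤ n}) ∪ {v | h v ≤ n - 1})) : ℤ) -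
        (Module.finrank k ↥(W ⊓ SS {v | h v ≤ n - 1}) : ℤ) := by
  set J : Set V := (I ∩ {v | h v ≤ n}) ∪ {v | h v ≤ n - 1} with hJ
  set p : Submodule k ((v : V) → U v) := W ⊓ SS J with hp
  set f : ((v : V) → U v) →ₗ[k] ((v : V) → U v) := projEnd k U {v | h v = n} with hf
  haveI : FiniteDimensional k ↥p := Submodule.finiteDimensional_inf_left W (SS J)
  have hle : W ⊓ SS {v | h v ≤ n - 1} ≤ p := by
    refine inf_le_inf le_rfl (SS_mono ?_)
    intro v hv
    exact Or.inr hv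
  have hker : LinearMap.ker (f.comp p.subtype)
      = Submodule.comap p.subtype (W ⊓ SS {v | h v ≤ n - 1}) := by
    ext x
    simp only [LinearMap.mem_ker, LinearMap.comp_apply, Submodule.mem_comap,
      Submodule.coe_subtype, Submodule.mem_inf]
    constructor
    · intro hfx
      refine ⟨x.2.1, ?_⟩
      rw [mem_SS]
      intro v hv
      have hxJ : ∀ u, u ∉ J → (x : (v : V) → U v) u = 0 := mem_SS.1 x.2.2
      by_cases hvJ : v ∈ J
      · have hvn : h v = n := by
          rcases hvJ with hc | hc
          · have h1 := hc.2
            simp only [Set.mem_setOf_eq] at h1 hv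
            omega
          · exact absurd hc hv
        have h2 := congrFun hfx v
        rw [hf, projEnd_apply, if_pos (show v ∈ {v | h v = n} from hvn)] at h2
        exact h2
      · exact hxJ v hvJ
    · rintro ⟨-, hx⟩
      funext v
      rw [hf, projEnd_apply]
      split_ifs with hvn
      · have hvn' : h v = n := hvn
        rw [mem_SS] at hx
        refine hx v ?_
        simp only [Set.mem_setOf_eq]
        omega
      · rfl
  have hrange : LinearMap.range (f.comp p.subtype) = p.map f := by
    rw [LinearMap.range_comp, Submodule.range_subtype]
  have heq : Module.finrank k ↥(Submodule.comap p.subtype (W ⊓ SS {v | h v ≤ n - 1}))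
      = Module.finrank k ↥(W ⊓ SS {v | h v ≤ n - 1}) :=
    (Submodule.comapSubtypeEquivOfLe hle).finrank_eq
  have hrn := LinearMap.finrank_range_add_finrank_ker (f.comp p.subtype)
  rw [hrange, hker, heq] at hrn
  omega

theorem stmt10 (W : Submodule k ((v : V) → U v)) [FiniteDimensional k ↥W]
    (r : ℕ) (h : V → ℕ) (hlev : ∀ v, 1 ≤ h v ∧ h v ≤ r)
    (hsurj : ∀ n, 1 ≤ n → n ≤ r → ∃ v, h v = n) :
    ∀ I : Set V,
      (Module.finrank k
          ↥((⨆ n ∈ Finset.Icc 1 r,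
                (W ⊓ LinearMap.ker (projEnd k U ({v | h v ≤ n}ᶜ))).map
                  (projEnd k U {v | h v = n})) ⊓
              LinearMap.ker (projEnd k U Iᶜ)) : ℤ) =
        ∑ n ∈ Finset.Icc 1 r,
          ((Module.finrank k
              ↥(W ⊓ LinearMap.ker
                  (projEnd k U (((I ∩ {v | h v ≤ n}) ∪ {v | h v ≤ n - 1})ᶜ))) : ℤ) -
            (Module.finrank k
              ↥(W ⊓ LinearMap.ker (projEnd k U ({v | h v ≤ n - 1}ᶜ))) : ℤ)) := by
  intro I
  have hMP : ∀ n : ℕ,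
      (W ⊓ SS {v | h v ≤ n}).map (projEnd k U {v | h v = n}) ≤ SS {v | h v = n} := by
    intro n
    rw [Submodule.map_le_iff_le_comap]
    intro y _
    exact projEnd_mem_SS _ _
  have e1 := inf_biSup
    (fun n => (W ⊓ SS {v | h v ≤ n}).map (projEnd k U {v | h v = n})) r h hlev I hMP
  have e2 : (⨆ n ∈ Finset.Icc 1 r,
        (((W ⊓ SS {v | h v ≤ n}).map (projEnd k U {v | h v = n})) ⊓ SS I))
      = ⨆ n ∈ Finset.Icc 1 r,
          (W ⊓ SS ((I ∩ {v | h v ≤ n}) ∪ {v | h v ≤ n - 1})).map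
            (projEnd k U {v | h v = n}) :=
    iSup_congr fun n => iSup_congr fun hn => inf_SS_eq W h I n (Finset.mem_Icc.1 hn).1
  have hfin : ∀ n : ℕ, FiniteDimensional k
      ↥((W ⊓ SS ((I ∩ {v | h v ≤ n}) ∪ {v | h v ≤ n - 1})).map
          (projEnd k U {v | h v = n})) := fun n => inferInstance
  have hle : ∀ n : ℕ,
      (W ⊓ SS ((I ∩ {v | h v ≤ n}) ∪ {v | h v ≤ n - 1})).map
          (projEnd k U {v | h v = n}) ≤ SS {v | h v = n} := by
    intro n
    rw [Submodule.map_le_iff_le_comap]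
    intro y _
    exact projEnd_mem_SS _ _
  have hd : ∀ m n : ℕ, m ≠ n → ∀ v, v ∈ ({v | h v = m} : Set V) → v ∉ ({v | h v = n} : Set V) := by
    intro m n hmn v hv hv'
    simp only [Set.mem_setOf_eq] at hv hv'
    omega
  have e3 := finrank_biSup_eq_sum (Finset.Icc 1 r)
    (fun n => (W ⊓ SS ((I ∩ {v | h v ≤ n}) ∪ {v | h v ≤ n - 1})).map
        (projEnd k U {v | h v = n}))
    (fun n => {v | h v = n}) hfin hle hd
  show (Module.finrank k
          ↥((⨆ n ∈ Finset.Icc 1 r,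
                (W ⊓ SS {v | h v ≤ n}).map (projEnd k U {v | h v = n})) ⊓ SS I) : ℤ)
      = ∑ n ∈ Finset.Icc 1 r,
          ((Module.finrank k ↥(W ⊓ SS ((I ∩ {v | h v ≤ n}) ∪ {v | h v ≤ n - 1})) : ℤ) -
            (Module.finrank k ↥(W ⊓ SS {v | h v ≤ n - 1}) : ℤ))
  rw [e1, e2, e3]
  push_cast
  exact Finset.sum_congr rfl fun n hn => rank_step W h I n (Finset.mem_Icc.1 hn).1
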